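/- With F(X) = AᵀS(X)A + α·tr(X)·CᵀC and S(X) = X − XB(α·tr(X)·R + BᵀXB)⁻¹BᵀX, if (A,C) is observable then for every nonzero X ⪰ 0 the n-th iterate Fⁿ(X) is positive definite. -/

import Mathlib

open Matrix

/-- The homogenized Riccati operator
`F(X) = AᵀS(X)A + α·tr(X)·CᵀC`, `S(X) = X − XB(α·tr(X)·R + BᵀXB)⁻¹BᵀX`. -/
noncomputable def riccOp {n m p : ℕ} (A : Matrix (Fin n) (Fin n) ℝ)
    (B : Matrix (Fin n) (Fin m) ℝ) (C : Matrix (Fin p) (Fin n) ℝ)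
    (R : Matrix (Fin m) (Fin m) ℝ) (α : ℝ)
    (X : Matrix (Fin n) (Fin n) ℝ) : Matrix (Fin n) (Fin n) ℝ :=
  Aᵀ * (X - X * B * ((α * X.trace) • R + Bᵀ * X * B)⁻¹ * Bᵀ * X) * A
    + (α * X.trace) • (Cᵀ * C)

section aux
variable {k : ℕ}

lemma psd_smul {c : ℝ} (hc : 0 ≤ c) {X : Matrix (Fin k) (Fin k) ℝ}
    (hX : X.PosSemidef) : (c • X).PosSemidef := by
  refine Matrix.PosSemidef.of_dotProduct_mulVec_nonneg ?_ (fun v => ?_)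
  · have h := hX.1
    unfold Matrix.IsHermitian at *
    rw [conjTranspose_smul, h]
    simp
  · have h := hX.dotProduct_mulVec_nonneg v
    simp only [smul_mulVec, dotProduct_smul, smul_eq_mul]
    exact mul_nonneg hc h

lemma pd_smul {c : ℝ} (hc : 0 < c) {X : Matrix (Fin k) (Fin k) ℝ}
    (hX : X.PosDef) : (c • X).PosDef := by
  refine Matrix.PosDef.of_dotProduct_mulVec_pos (psd_smul hc.le hX.posSemidef).1 fun v hv => ?_
  have h := hX.dotProduct_mulVec_pos hv
  simp only [smul_mulVec, dotProduct_smul, smul_eq_mul]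
  exact mul_pos hc h

lemma psd_trace_pos {X : Matrix (Fin k) (Fin k) ℝ}
    (hX : X.PosSemidef) (hX0 : X ≠ 0) : 0 < X.trace := by
  have hdiag : ∀ i, 0 ≤ X i i := fun i => by
    have := hX.dotProduct_mulVec_nonneg (Pi.single i 1)
    simpa using this
  have htr : 0 ≤ X.trace := Finset.sum_nonneg fun i _ => hdiag i
  rcases htr.lt_or_eq with h | h
  · exact h
  exfalso
  apply hX0
  have hdz : ∀ i, X i i = 0 := fun i =>
    (Finset.sum_eq_zero_iff_of_nonneg (fun i _ => hdiag i)).1 h.symm i (Finset.mem_univ i)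
  ext i j
  have hq : star (Pi.single j (1:ℝ)) ⬝ᵥ X *ᵥ Pi.single j 1 = 0 := by
    simpa using hdz j
  have h2 := congrFun ((hX.dotProduct_mulVec_zero_iff (Pi.single j 1)).1 hq) i
  simpa using h2

lemma eq_zero_of_forall_mulVec {q : ℕ} {C : Matrix (Fin q) (Fin k) ℝ}
    (h : ∀ v, C *ᵥ v = 0) : C = 0 := by
  ext i j
  have := congrFun (h (Pi.single j 1)) i
  simpa using this

lemma quad_conj {a b : ℕ} (P : Matrix (Fin a) (Fin b) ℝ) (X : Matrix (Fin a) (Fin a) ℝ)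
    (w : Fin b → ℝ) :
    w ⬝ᵥ ((Pᵀ * X * P) *ᵥ w) = (P *ᵥ w) ⬝ᵥ (X *ᵥ (P *ᵥ w)) := by
  rw [← mulVec_mulVec, ← mulVec_mulVec, dotProduct_mulVec, vecMul_transpose]

lemma quad_gram {a b : ℕ} (C : Matrix (Fin a) (Fin b) ℝ) (v : Fin b → ℝ) :
    v ⬝ᵥ ((Cᵀ * C) *ᵥ v) = (C *ᵥ v) ⬝ᵥ (C *ᵥ v) := by
  rw [← mulVec_mulVec, dotProduct_mulVec, vecMul_transpose]

/-- Abstract Schur-type decomposition. -/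
lemma schur_decomp' {a b : ℕ} (X : Matrix (Fin a) (Fin a) ℝ) (B : Matrix (Fin a) (Fin b) ℝ)
    (R' : Matrix (Fin b) (Fin b) ℝ) (K : Matrix (Fin b) (Fin a) ℝ)
    (hG : (R' + Bᵀ * X * B) * K = Bᵀ * X) :
    X - X * B * K = (1 - B * K)ᵀ * X * (1 - B * K) + Kᵀ * R' * K := by
  have h2 : Kᵀ * (R' * K) + Kᵀ * (Bᵀ * (X * (B * K))) = Kᵀ * (Bᵀ * X) := by
    rw [← Matrix.mul_add]
    rw [show R' * K + Bᵀ * (X * (B * K)) = (R' + Bᵀ * X * B) * K by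
      rw [Matrix.add_mul]; simp only [Matrix.mul_assoc], hG]
  have expand : (1 - B * K)ᵀ * X * (1 - B * K)
      = X - X * (B * K) - Kᵀ * (Bᵀ * X) + Kᵀ * (Bᵀ * (X * (B * K))) := by
    simp only [transpose_sub, transpose_one, transpose_mul, sub_mul, mul_sub, one_mul,
      mul_one, Matrix.mul_assoc]
    abel
  rw [expand, ← h2]
  simp only [Matrix.mul_assoc]
  abel

end aux

section step

variable {n m p : ℕ}

lemma ricc_step (A : Matrix (Fin n) (Fin n) ℝ) (B : Matrix (Fin n) (Fin m) ℝ)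
    (C : Matrix (Fin p) (Fin n) ℝ) (R : Matrix (Fin m) (Fin m) ℝ) (α : ℝ)
    (hR : R.PosDef)
    {X : Matrix (Fin n) (Fin n) ℝ} (hX : X.PosSemidef) (hc : 0 < α * X.trace) :
    (riccOp A B C R α X).PosSemidef ∧
    ∀ v, v ⬝ᵥ (riccOp A B C R α X *ᵥ v) = 0 →
      C *ᵥ v = 0 ∧ X *ᵥ (A *ᵥ v) = 0 := by
  have hBH : ∀ {a b : ℕ} (P : Matrix (Fin a) (Fin b) ℝ), Pᴴ = Pᵀ := fun P =>
    conjTranspose_eq_transpose_of_trivial P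
  obtain ⟨c, hcdef⟩ : ∃ c, c = α * X.trace := ⟨_, rfl⟩
  rw [← hcdef] at hc
  obtain ⟨M, hMdef⟩ : ∃ M, M = c • R + Bᵀ * X * B := ⟨_, rfl⟩
  have hgoal : riccOp A B C R α X
      = Aᵀ * (X - X * B * M⁻¹ * Bᵀ * X) * A + c • (Cᵀ * C) := by
    rw [riccOp, ← hcdef, hMdef]
  have hXBB : (Bᵀ * X * B).PosSemidef := by
    have := hX.conjTranspose_mul_mul_same B
    rwa [hBH] at this
  have hM : M.PosDef := by
    rw [hMdef]; exact (pd_smul hc hR).add_posSemidef hXBB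
  have hMinv : M * M⁻¹ = 1 := mul_nonsing_inv _ ((isUnit_iff_isUnit_det M).1 hM.isUnit)
  obtain ⟨K, hKdef⟩ : ∃ K, K = M⁻¹ * Bᵀ * X := ⟨_, rfl⟩
  have hMK : (c • R + Bᵀ * X * B) * K = Bᵀ * X := by
    rw [← hMdef, hKdef, ← Matrix.mul_assoc, ← Matrix.mul_assoc, hMinv, Matrix.one_mul]
  have hXBK : X - X * B * M⁻¹ * Bᵀ * X = X - X * B * K := by
    rw [hKdef]
    simp only [Matrix.mul_assoc]
  have hS : X - X * B * M⁻¹ * Bᵀ * X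
      = (1 - B * K)ᵀ * X * (1 - B * K) + Kᵀ * (c • R) * K := by
    rw [hXBK]
    exact schur_decomp' X B (c • R) K hMK
  rw [hgoal, hS]
  obtain ⟨S, hSdef⟩ : ∃ S, S = (1 - B * K)ᵀ * X * (1 - B * K) + Kᵀ * (c • R) * K := ⟨_, rfl⟩
  rw [← hSdef]
  have hquadS : ∀ w : Fin n → ℝ, w ⬝ᵥ (S *ᵥ w) =
      ((1 - B * K) *ᵥ w) ⬝ᵥ (X *ᵥ ((1 - B * K) *ᵥ w))
        + (K *ᵥ w) ⬝ᵥ ((c • R) *ᵥ (K *ᵥ w)) := by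
    intro w
    rw [hSdef, add_mulVec, dotProduct_add, quad_conj, quad_conj]
  have hSpsd : S.PosSemidef := by
    rw [hSdef]
    refine Matrix.PosSemidef.add ?_ ?_
    · have := hX.conjTranspose_mul_mul_same (1 - B * K)
      rwa [hBH] at this
    · have := (psd_smul hc.le hR.posSemidef).conjTranspose_mul_mul_same K
      rwa [hBH] at this
  have hquadF : ∀ v : Fin n → ℝ,
      v ⬝ᵥ ((Aᵀ * S * A + c • (Cᵀ * C)) *ᵥ v) =
      (A *ᵥ v) ⬝ᵥ (S *ᵥ (A *ᵥ v)) + c * ((C *ᵥ v) ⬝ᵥ (C *ᵥ v)) := by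
    intro v
    rw [add_mulVec, dotProduct_add, quad_conj, smul_mulVec, dotProduct_smul,
      smul_eq_mul, quad_gram]
  have hCtC : (Cᵀ * C).PosSemidef := by
    have := posSemidef_conjTranspose_mul_self C
    rwa [hBH] at this
  have hFpsd : (Aᵀ * S * A + c • (Cᵀ * C)).PosSemidef := by
    refine Matrix.PosSemidef.add ?_ (psd_smul hc.le hCtC)
    have := hSpsd.conjTranspose_mul_mul_same A
    rwa [hBH] at this
  refine ⟨hFpsd, fun v hv => ?_⟩
  have h1 : 0 ≤ (A *ᵥ v) ⬝ᵥ (S *ᵥ (A *ᵥ v)) := by simpa using hSpsd.dotProduct_mulVec_nonneg (A *ᵥ v)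
  have h2 : 0 ≤ (C *ᵥ v) ⬝ᵥ (C *ᵥ v) := by
    simpa using dotProduct_star_self_nonneg (C *ᵥ v)
  rw [hquadF v] at hv
  have h3 : 0 ≤ c * ((C *ᵥ v) ⬝ᵥ (C *ᵥ v)) := mul_nonneg hc.le h2
  have hSA : (A *ᵥ v) ⬝ᵥ (S *ᵥ (A *ᵥ v)) = 0 := by linarith
  have hCv : C *ᵥ v = 0 := by
    have hCv2 : (C *ᵥ v) ⬝ᵥ (C *ᵥ v) = 0 := by
      rcases mul_eq_zero.1 (by linarith : c * ((C *ᵥ v) ⬝ᵥ (C *ᵥ v)) = 0) with h | h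
      · exact absurd h hc.ne'
      · exact h
    exact dotProduct_self_eq_zero.1 hCv2
  rw [hquadS] at hSA
  have hq1 : 0 ≤ ((1 - B * K) *ᵥ (A *ᵥ v)) ⬝ᵥ (X *ᵥ ((1 - B * K) *ᵥ (A *ᵥ v))) := by
    simpa using hX.dotProduct_mulVec_nonneg ((1 - B * K) *ᵥ (A *ᵥ v))
  have hq2 : 0 ≤ (K *ᵥ (A *ᵥ v)) ⬝ᵥ ((c • R) *ᵥ (K *ᵥ (A *ᵥ v))) := by
    simpa using (psd_smul hc.le hR.posSemidef).dotProduct_mulVec_nonneg (K *ᵥ (A *ᵥ v))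
  have hKAv : K *ᵥ (A *ᵥ v) = 0 := by
    by_contra hne
    have := (pd_smul hc hR).dotProduct_mulVec_pos hne
    simp only [star_trivial] at this
    linarith
  have h1Bk : (1 - B * K) *ᵥ (A *ᵥ v) = A *ᵥ v := by
    rw [sub_mulVec, one_mulVec, ← mulVec_mulVec, hKAv, mulVec_zero, sub_zero]
  rw [h1Bk, hKAv, zero_dotProduct, add_zero] at hSA
  have hXAv : X *ᵥ (A *ᵥ v) = 0 := by
    apply (hX.dotProduct_mulVec_zero_iff (A *ᵥ v)).1
    rw [star_trivial]
    exact hSA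
  exact ⟨hCv, hXAv⟩

end step

/-- If `(A,C)` is observable then the `n`-th iterate of the homogenized
Riccati operator maps every nonzero PSD matrix to a positive definite one. -/
theorem riccOp_iterate_posDef
    {n m p : ℕ} (A : Matrix (Fin n) (Fin n) ℝ) (B : Matrix (Fin n) (Fin m) ℝ)
    (C : Matrix (Fin p) (Fin n) ℝ) (R : Matrix (Fin m) (Fin m) ℝ)
    (α : ℝ) (hα : 0 < α) (hR : R.PosDef)
    (hObs : ∀ v : Fin n → ℝ, (∀ k < n, C *ᵥ ((A ^ k) *ᵥ v) = 0) → v = 0) :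
    ∀ X : Matrix (Fin n) (Fin n) ℝ, X.PosSemidef → X ≠ 0 →
      ((riccOp A B C R α)^[n] X).PosDef := by
  intro X hX hX0
  rcases Nat.eq_zero_or_pos n with hn | hn
  · subst hn
    exact Matrix.PosDef.of_dotProduct_mulVec_pos hX.1 fun v hv => absurd (funext fun i : Fin 0 => i.elim0) hv
  have hCne : C ≠ 0 := by
    intro hC0
    have hv : (Pi.single (⟨0, hn⟩ : Fin n) (1:ℝ)) = (0 : Fin n → ℝ) := by
      apply hObs
      intro k _
      rw [hC0, zero_mulVec]
    have h1 := congrFun hv (⟨0, hn⟩ : Fin n)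
    simp at h1
  have key : ∀ k : ℕ, ((riccOp A B C R α)^[k] X).PosSemidef ∧
      (riccOp A B C R α)^[k] X ≠ 0 ∧
      ∀ v : Fin n → ℝ, v ⬝ᵥ ((riccOp A B C R α)^[k] X *ᵥ v) = 0 →
        (∀ j < k, C *ᵥ ((A ^ j) *ᵥ v) = 0) ∧ X *ᵥ ((A ^ k) *ᵥ v) = 0 := by
    intro k
    induction k with
    | zero =>
      refine ⟨hX, hX0, fun v hv => ⟨fun j hj => absurd hj (Nat.not_lt_zero j), ?_⟩⟩
      have := (hX.dotProduct_mulVec_zero_iff v).1 (by simpa using hv)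
      simpa using this
    | succ k ih =>
      obtain ⟨hpsd, hne, hker⟩ := ih
      have hc : 0 < α * ((riccOp A B C R α)^[k] X).trace :=
        mul_pos hα (psd_trace_pos hpsd hne)
      obtain ⟨hFpsd, hFker⟩ := ricc_step A B C R α hR hpsd hc
      rw [Function.iterate_succ_apply']
      refine ⟨hFpsd, ?_, ?_⟩
      · intro hF0
        apply hCne
        apply eq_zero_of_forall_mulVec
        intro v
        exact (hFker v (by rw [hF0]; simp)).1
      · intro v hv
        obtain ⟨hCv, hYAv⟩ := hFker v hv
        have hquad : (A *ᵥ v) ⬝ᵥ ((riccOp A B C R α)^[k] X *ᵥ (A *ᵥ v)) = 0 := by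
          rw [hYAv, dotProduct_zero]
        obtain ⟨hCj, hXk⟩ := hker (A *ᵥ v) hquad
        constructor
        · intro j hj
          match j with
          | 0 => simpa using hCv
          | (i+1) =>
            rw [show (A ^ (i+1)) *ᵥ v = (A ^ i) *ᵥ (A *ᵥ v) from by
              rw [pow_succ, ← mulVec_mulVec]]
            exact hCj i (by omega)
        · rw [show (A ^ (k+1)) *ᵥ v = (A ^ k) *ᵥ (A *ᵥ v) from by
            rw [pow_succ, ← mulVec_mulVec]]
          exact hXk
  obtain ⟨hpsd, -, hker⟩ := key n
  refine Matrix.PosDef.of_dotProduct_mulVec_pos hpsd.1 fun v hv => ?_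
  have h0 : (0:ℝ) ≤ v ⬝ᵥ ((riccOp A B C R α)^[n] X *ᵥ v) := by simpa using hpsd.dotProduct_mulVec_nonneg v
  rcases h0.lt_or_eq with h | h
  · simpa using h
  · exact absurd (hObs v (hker v h.symm).1) hv
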